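/- Let x and X be elements of an associative algebra satisfying X·x = (x − η)·X. For a polynomial F(u) = Σ_p u^p F_p with coefficients F_p in the algebra, define the left substitution [F(u)]_{u=x} := Σ_p x^p F_p. Suppose A(u) is a polynomial with [A(u)]_{u=x} = X. Then for every polynomial F(u), [A(u)·F(u−η)]_{u=x} = X·[F(u)]_{u=x}. -/
import Mathlib


open Polynomial

/-- Left substitution `[Σ_k u^k C_k]_{u=x} = Σ_k x^k C_k`, placing all powers
of `x` to the left of the coefficients. -/
noncomputable def leftSubst {A : Type*} [Ring A] (x : A) (F : A[X]) : A :=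
  F.sum fun k a => x ^ k * a

/-- The shifted polynomial `u ↦ p(u - c)`. -/
noncomputable def shiftDown {A : Type*} [Ring A] (c : A) (p : A[X]) : A[X] :=
  p.comp (Polynomial.X - Polynomial.C c)

lemma ls_add {A : Type*} [Ring A] (x : A) (p q : A[X]) :
    leftSubst x (p + q) = leftSubst x p + leftSubst x q := by
  unfold leftSubst
  apply Polynomial.sum_add_index <;> simp [mul_add]

lemma ls_monomial {A : Type*} [Ring A] (x : A) (n : ℕ) (a : A) :
    leftSubst x (monomial n a) = x ^ n * a := by
  unfold leftSubst
  rw [Polynomial.sum_monomial_index]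
  simp

lemma ls_mul_C {A : Type*} [Ring A] (x : A) (p : A[X]) (a : A) :
    leftSubst x (p * C a) = leftSubst x p * a := by
  induction p using Polynomial.induction_on' with
  | add p q hp hq => rw [add_mul, ls_add, ls_add, hp, hq, add_mul]
  | monomial n b =>
      rw [Polynomial.monomial_mul_C, ls_monomial, ls_monomial, mul_assoc]

lemma central_pow {A : Type*} [Ring A] (x h : A) (hc : ∀ b : A, h * b = b * h)
    (n : ℕ) : h * x ^ n = x ^ n * h := hc (x ^ n)

lemma ls_mul_X_sub_C {A : Type*} [Ring A] (x h : A)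
    (hc : ∀ b : A, h * b = b * h) (p : A[X]) :
    leftSubst x (p * (Polynomial.X - C h)) = (x - h) * leftSubst x p := by
  induction p using Polynomial.induction_on' with
  | add p q hp hq => rw [add_mul, ls_add, ls_add, hp, hq, mul_add]
  | monomial n b =>
      have e1 : (monomial n) b * (Polynomial.X - C h)
          = (monomial (n + 1)) b + (monomial n) (-(b * h)) := by
        rw [mul_sub, Polynomial.monomial_mul_X, Polynomial.monomial_mul_C,
          Polynomial.monomial_neg, sub_eq_add_neg]
      rw [e1, ls_add, ls_monomial, ls_monomial, ls_monomial]
      have e2 : x ^ n * -(b * h) = -(h * (x ^ n * b)) := by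
        calc x ^ n * -(b * h) = -(x ^ n * (b * h)) := by noncomm_ring
          _ = -(x ^ n * (h * b)) := by rw [hc b]
          _ = -(x ^ n * h * b) := by rw [mul_assoc]
          _ = -(h * x ^ n * b) := by rw [hc (x ^ n)]
          _ = -(h * (x ^ n * b)) := by rw [mul_assoc]
      rw [e2, pow_succ']
      noncomm_ring

/-- If `X·x = (x − η)·X` and `A(u)` is a polynomial with `[A(u)]_{u=x} = X`,
then `[A(u)F(u−η)]_{u=x} = X·[F(u)]_{u=x}` for every polynomial `F`. -/
theorem leftSubst_shift_lemma
    {R : Type*} [CommRing R] {A : Type*} [Ring A] [Algebra R A]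
    (η : R) (x ξ : A)
    (hcomm : ξ * x = (x - algebraMap R A η) * ξ)
    (Ap : A[X]) (hA : leftSubst x Ap = ξ) :
    ∀ F : A[X],
      leftSubst x (Ap * shiftDown (algebraMap R A η) F) = ξ * leftSubst x F := by
  set h : A := algebraMap R A η with hh
  have hc : ∀ b : A, h * b = b * h := fun b => Algebra.commutes η b
  have key : ∀ n : ℕ, leftSubst x (Ap * (Polynomial.X - C h) ^ n) = ξ * x ^ n := by
    intro n
    induction n with
    | zero => simpa using hA
    | succ m ih =>
        rw [pow_succ, ← mul_assoc, ls_mul_X_sub_C x h hc, ih, ← mul_assoc, ← hcomm,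
          mul_assoc, ← pow_succ']
  intro F
  induction F using Polynomial.induction_on' with
  | add p q hp hq =>
      have : shiftDown h (p + q) = shiftDown h p + shiftDown h q := by
        unfold shiftDown; rw [Polynomial.add_comp]
      rw [this, mul_add, ls_add, hp, hq, ls_add, mul_add]
  | monomial n a =>
      have hcomm2 : Commute (Polynomial.X - C h) (C a) := by
        apply Commute.sub_left
        · exact Polynomial.commute_X (C a)
        · show C h * C a = C a * C h
          rw [← Polynomial.C_mul, ← Polynomial.C_mul, hc]
      have hsd : shiftDown h (monomial n a) = (Polynomial.X - C h) ^ n * C a := by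
        unfold shiftDown
        rw [Polynomial.monomial_comp, (hcomm2.pow_left n).eq]
      rw [hsd, ← mul_assoc, ls_mul_C, key, ls_monomial, mul_assoc]
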